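/- If √γ_k ≤ C(√γ_{k−j} + √γ_j) for all k, j ∈ ℤ and ∑_{k∈ℤ} 1/γ_k < ∞, then H_γ(𝕋) is a Banach algebra: there exists C̃ > 0 with |uv|_γ ≤ C̃ |u|_γ |v|_γ for all u, v ∈ H_γ(𝕋). -/

import Mathlib

open scoped BigOperators ENNReal

lemma rpow_two_conv (f : ℤ → ℝ) :
    (fun k => ‖f k‖ ^ (2 : ℝ≥0∞).toReal) = fun k => (f k) ^ 2 := by
  funext k
  rw [ENNReal.toReal_ofNat, show ((2:ℝ)) = ((2:ℕ):ℝ) by norm_num, Real.rpow_natCast,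
    Real.norm_eq_abs, sq_abs]

lemma summable_mul_of_sq {f g : ℤ → ℝ} (hf0 : ∀ k, 0 ≤ f k) (hg0 : ∀ k, 0 ≤ g k)
    (hf : Summable fun k => f k ^ 2) (hg : Summable fun k => g k ^ 2) :
    Summable fun k => f k * g k := by
  refine Summable.of_nonneg_of_le (fun k => mul_nonneg (hf0 k) (hg0 k)) (fun k => ?_) (hf.add hg)
  nlinarith [sq_nonneg (f k - g k)]

lemma cs_tsum {f g : ℤ → ℝ} (hf0 : ∀ k, 0 ≤ f k) (hg0 : ∀ k, 0 ≤ g k)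
    (hf : Summable fun k => f k ^ 2) (hg : Summable fun k => g k ^ 2) :
    ∑' k, f k * g k ≤ Real.sqrt (∑' k, f k ^ 2) * Real.sqrt (∑' k, g k ^ 2) := by
  refine Summable.tsum_le_of_sum_le (summable_mul_of_sq hf0 hg0 hf hg) (fun s => ?_)
  have h1 : (∑ k ∈ s, f k * g k) ^ 2 ≤ (∑ k ∈ s, f k ^ 2) * ∑ k ∈ s, g k ^ 2 :=
    Finset.sum_mul_sq_le_sq_mul_sq s f g
  have h2 : ∑ k ∈ s, f k * g k = Real.sqrt ((∑ k ∈ s, f k * g k) ^ 2) :=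
    (Real.sqrt_sq (Finset.sum_nonneg fun k _ => mul_nonneg (hf0 k) (hg0 k))).symm
  rw [h2]
  calc Real.sqrt ((∑ k ∈ s, f k * g k) ^ 2)
      ≤ Real.sqrt ((∑ k ∈ s, f k ^ 2) * ∑ k ∈ s, g k ^ 2) := Real.sqrt_le_sqrt h1
    _ = Real.sqrt (∑ k ∈ s, f k ^ 2) * Real.sqrt (∑ k ∈ s, g k ^ 2) := Real.sqrt_mul
        (Finset.sum_nonneg fun k _ => sq_nonneg _) _
    _ ≤ _ := mul_le_mul
        (Real.sqrt_le_sqrt (Summable.sum_le_tsum s (fun k _ => sq_nonneg _) hf))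
        (Real.sqrt_le_sqrt (Summable.sum_le_tsum s (fun k _ => sq_nonneg _) hg))
        (Real.sqrt_nonneg _) (Real.sqrt_nonneg _)

lemma minkowski_lp (h : ℤ → ℤ → ℝ) (c : ℤ → ℝ) (h0 : ∀ j k, 0 ≤ h j k)
    (hc0 : ∀ j, 0 ≤ c j)
    (hcol : ∀ j, HasSum (fun k => (h j k) ^ 2) ((c j) ^ 2)) (hcs : Summable c) :
    ∃ F : lp (fun _ : ℤ => ℝ) 2, (∀ k, HasSum (fun j => h j k) (F k)) ∧
      ‖F‖ ≤ ∑' j, c j := by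
  haveI : Fact ((1:ℝ≥0∞) ≤ 2) := ⟨one_le_two⟩
  have hp : 0 < (2 : ℝ≥0∞).toReal := by norm_num
  have hmem : ∀ j, Memℓp (h j) 2 := fun j =>
    memℓp_gen (by rw [rpow_two_conv]; exact (hcol j).summable)
  set A : ℤ → lp (fun _ : ℤ => ℝ) 2 := fun j => ⟨h j, hmem j⟩ with hA
  have hAnorm : ∀ j, ‖A j‖ = c j := by
    intro j
    have h2 : ‖A j‖ ^ (2:ℝ≥0∞).toReal = ∑' k, ‖A j k‖ ^ (2:ℝ≥0∞).toReal :=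
      lp.norm_rpow_eq_tsum hp (A j)
    rw [ENNReal.toReal_ofNat, show ((2:ℝ)) = ((2:ℕ):ℝ) by norm_num] at h2
    simp only [Real.rpow_natCast, Real.norm_eq_abs, sq_abs] at h2
    rw [(hcol j).tsum_eq] at h2
    have := congrArg Real.sqrt h2
    rwa [Real.sqrt_sq (norm_nonneg _), Real.sqrt_sq (hc0 j)] at this
  have hAsum : Summable A := Summable.of_norm (by simpa [hAnorm] using hcs)
  refine ⟨∑' j, A j, fun k => ?_, ?_⟩
  · have hmap := (hAsum.hasSum).mapL (innerSL ℝ (lp.single 2 k (1:ℝ)))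
    simp only [innerSL_apply_apply, lp.inner_single_left, RCLike.inner_apply, map_one, one_mul, mul_one] at hmap
    exact hmap
  · calc ‖∑' j, A j‖ ≤ ∑' j, ‖A j‖ := norm_tsum_le_tsum_norm (by simpa [hAnorm] using hcs)
      _ = ∑' j, c j := tsum_congr hAnorm

/-- Fourier coefficients of a product: convolution. -/
noncomputable def fourierConv (u v : ℤ → ℂ) (k : ℤ) : ℂ := ∑' j : ℤ, u (k - j) * v j

theorem stmt4 (γ : ℤ → ℝ) (hγ : ∀ k, 0 < γ k) (C : ℝ) (hC : 0 < C)
    (hsub : ∀ k j : ℤ, Real.sqrt (γ k) ≤ C * (Real.sqrt (γ (k - j)) + Real.sqrt (γ j)))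
    (hsum : Summable fun k => 1 / γ k) :
    ∃ Ctilde > 0, ∀ u v : ℤ → ℂ,
      Summable (fun k => γ k * ‖u k‖ ^ 2) → Summable (fun k => γ k * ‖v k‖ ^ 2) →
      Summable (fun k => γ k * ‖fourierConv u v k‖ ^ 2) ∧
      Real.sqrt (∑' k : ℤ, γ k * ‖fourierConv u v k‖ ^ 2) ≤
        Ctilde * Real.sqrt (∑' k : ℤ, γ k * ‖u k‖ ^ 2) *
          Real.sqrt (∑' k : ℤ, γ k * ‖v k‖ ^ 2) := by
  haveI : Fact ((1:ℝ≥0∞) ≤ 2) := ⟨one_le_two⟩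
  have hp : 0 < (2 : ℝ≥0∞).toReal := by norm_num
  set S : ℝ := ∑' k : ℤ, 1 / γ k with hS_def
  have hS0 : 0 < S := Summable.tsum_pos hsum (fun k => (div_pos one_pos (hγ k)).le) 0 (div_pos one_pos (hγ 0))
  have hSle : ∀ k, 1 / γ k ≤ S := fun k => Summable.le_tsum hsum k (fun j _ => (div_pos one_pos (hγ j)).le)
  refine ⟨2 * C * Real.sqrt S, mul_pos (mul_pos two_pos hC) (Real.sqrt_pos.mpr hS0), fun u v hu hv => ?_⟩
  set a : ℤ → ℝ := fun k => Real.sqrt (γ k) * ‖u k‖ with ha_def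
  set b : ℤ → ℝ := fun k => Real.sqrt (γ k) * ‖v k‖ with hb_def
  have ha_eq : (fun k => a k ^ 2) = fun k => γ k * ‖u k‖ ^ 2 := by
    funext k; simp only [ha_def, mul_pow, Real.sq_sqrt (hγ k).le]
  have hb_eq : (fun k => b k ^ 2) = fun k => γ k * ‖v k‖ ^ 2 := by
    funext k; simp only [hb_def, mul_pow, Real.sq_sqrt (hγ k).le]
  have ha2 : Summable fun k => a k ^ 2 := by rw [ha_eq]; exact hu
  have hb2 : Summable fun k => b k ^ 2 := by rw [hb_eq]; exact hv
  have ha0 : ∀ k, 0 ≤ a k := fun k => mul_nonneg (Real.sqrt_nonneg _) (norm_nonneg _)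
  have hb0 : ∀ k, 0 ≤ b k := fun k => mul_nonneg (Real.sqrt_nonneg _) (norm_nonneg _)
  set Na : ℝ := Real.sqrt (∑' k : ℤ, γ k * ‖u k‖ ^ 2) with hNa_def
  set Nb : ℝ := Real.sqrt (∑' k : ℤ, γ k * ‖v k‖ ^ 2) with hNb_def
  have hNa0 : 0 ≤ Na := Real.sqrt_nonneg _
  have hNb0 : 0 ≤ Nb := Real.sqrt_nonneg _
  have hNa_eq : Real.sqrt (∑' k, a k ^ 2) = Na := by rw [ha_eq]
  have hNb_eq : Real.sqrt (∑' k, b k ^ 2) = Nb := by rw [hb_eq]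
  have hNa_sq : Na ^ 2 = ∑' k, a k ^ 2 := by
    rw [← hNa_eq, Real.sq_sqrt (tsum_nonneg fun k => sq_nonneg _)]
  have hNb_sq : Nb ^ 2 = ∑' k, b k ^ 2 := by
    rw [← hNb_eq, Real.sq_sqrt (tsum_nonneg fun k => sq_nonneg _)]
  -- ℓ² membership of ‖u·‖, ‖v·‖
  have hU2 : Summable fun k => ‖u k‖ ^ 2 := by
    refine Summable.of_nonneg_of_le (fun k => sq_nonneg _) (fun k => ?_) (hu.mul_left S)
    have h1 : ‖u k‖ ^ 2 = (1 / γ k) * (γ k * ‖u k‖ ^ 2) := by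
      rw [one_div, ← mul_assoc, inv_mul_cancel₀ (hγ k).ne', one_mul]
    exact h1.trans_le (mul_le_mul_of_nonneg_right (hSle k) (mul_nonneg (hγ k).le (sq_nonneg _)))
  have hV2 : Summable fun k => ‖v k‖ ^ 2 := by
    refine Summable.of_nonneg_of_le (fun k => sq_nonneg _) (fun k => ?_) (hv.mul_left S)
    have h1 : ‖v k‖ ^ 2 = (1 / γ k) * (γ k * ‖v k‖ ^ 2) := by
      rw [one_div, ← mul_assoc, inv_mul_cancel₀ (hγ k).ne', one_mul]
    exact h1.trans_le (mul_le_mul_of_nonneg_right (hSle k) (mul_nonneg (hγ k).le (sq_nonneg _)))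
  -- ℓ¹ membership of ‖u·‖, ‖v·‖ with bounds
  set f : ℤ → ℝ := fun k => Real.sqrt (1 / γ k) with hf_def
  have hf2eq : (fun k => f k ^ 2) = fun k => 1 / γ k := by
    funext k; simp only [hf_def]; rw [Real.sq_sqrt (div_pos one_pos (hγ k)).le]
  have hf2 : Summable fun k => f k ^ 2 := by rw [hf2eq]; exact hsum
  have hf0 : ∀ k, 0 ≤ f k := fun k => Real.sqrt_nonneg _
  have hfa : ∀ k : ℤ, f k * a k = ‖u k‖ := by
    intro k
    simp only [hf_def, ha_def, one_div, Real.sqrt_inv]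
    exact inv_mul_cancel_left₀ (ne_of_gt (Real.sqrt_pos.mpr (hγ k))) _
  have hfb : ∀ k : ℤ, f k * b k = ‖v k‖ := by
    intro k
    simp only [hf_def, hb_def, one_div, Real.sqrt_inv]
    exact inv_mul_cancel_left₀ (ne_of_gt (Real.sqrt_pos.mpr (hγ k))) _
  have hu1 : Summable fun k => ‖u k‖ := by
    have := summable_mul_of_sq hf0 ha0 hf2 ha2
    simpa only [hfa] using this
  have hv1 : Summable fun k => ‖v k‖ := by
    have := summable_mul_of_sq hf0 hb0 hf2 hb2
    simpa only [hfb] using this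
  have hSf : Real.sqrt (∑' k, f k ^ 2) = Real.sqrt S := by rw [hf2eq]
  have hu1le : ∑' k, ‖u k‖ ≤ Real.sqrt S * Na := by
    have := cs_tsum hf0 ha0 hf2 ha2
    rw [hSf, hNa_eq] at this
    calc ∑' k, ‖u k‖ = ∑' k, f k * a k := by simp only [hfa]
      _ ≤ _ := this
  have hv1le : ∑' k, ‖v k‖ ≤ Real.sqrt S * Nb := by
    have := cs_tsum hf0 hb0 hf2 hb2
    rw [hSf, hNb_eq] at this
    calc ∑' k, ‖v k‖ = ∑' k, f k * b k := by simp only [hfb]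
      _ ≤ _ := this
  -- Minkowski for the two families
  have hcol1 : ∀ j : ℤ, HasSum (fun k => (a (k - j) * ‖v j‖) ^ 2) ((Na * ‖v j‖) ^ 2) := by
    intro j
    have hshift : HasSum (fun k : ℤ => a (k - j) ^ 2) (∑' m, a m ^ 2) :=
      ((Equiv.subRight j).hasSum_iff (f := fun m => a m ^ 2)).mpr ha2.hasSum
    simpa only [mul_pow, hNa_sq] using hshift.mul_right (‖v j‖ ^ 2)
  obtain ⟨F1, hF1p, hF1n⟩ := minkowski_lp (fun j k => a (k - j) * ‖v j‖)
    (fun j => Na * ‖v j‖) (fun j k => mul_nonneg (ha0 _) (norm_nonneg _))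
    (fun j => mul_nonneg hNa0 (norm_nonneg _)) hcol1 (hv1.mul_left Na)
  have hcol2 : ∀ i : ℤ, HasSum (fun k => (‖u i‖ * b (k - i)) ^ 2) ((Nb * ‖u i‖) ^ 2) := by
    intro i
    have hshift : HasSum (fun k : ℤ => b (k - i) ^ 2) (∑' m, b m ^ 2) :=
      ((Equiv.subRight i).hasSum_iff (f := fun m => b m ^ 2)).mpr hb2.hasSum
    have := hshift.mul_left (‖u i‖ ^ 2)
    simpa only [mul_pow, hNb_sq, mul_comm (‖u i‖ ^ 2)] using this
  obtain ⟨F2, hF2p, hF2n⟩ := minkowski_lp (fun i k => ‖u i‖ * b (k - i))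
    (fun i => Nb * ‖u i‖) (fun i k => mul_nonneg (norm_nonneg _) (hb0 _))
    (fun i => mul_nonneg hNb0 (norm_nonneg _)) hcol2 (hu1.mul_left Nb)
  -- key pointwise bound
  have key : ∀ k : ℤ, Real.sqrt (γ k) * ‖fourierConv u v k‖ ≤ C * (F1 k + F2 k) := by
    intro k
    have hU2s : Summable fun j => ‖u (k - j)‖ ^ 2 :=
      ((Equiv.subLeft k).summable_iff (f := fun m => ‖u m‖ ^ 2)).mpr hU2
    have ha2s : Summable fun j => a (k - j) ^ 2 :=
      ((Equiv.subLeft k).summable_iff (f := fun m => a m ^ 2)).mpr ha2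
    have hnorms : Summable fun j => ‖u (k - j)‖ * ‖v j‖ :=
      summable_mul_of_sq (fun _ => norm_nonneg _) (fun _ => norm_nonneg _) hU2s hV2
    have h1s : Summable fun j => a (k - j) * ‖v j‖ :=
      summable_mul_of_sq (fun j => ha0 _) (fun _ => norm_nonneg _) ha2s hV2
    have h2s : Summable fun j => ‖u (k - j)‖ * b j :=
      summable_mul_of_sq (fun _ => norm_nonneg _) (fun j => hb0 _) hU2s hb2
    have step1 : ‖fourierConv u v k‖ ≤ ∑' j, ‖u (k - j)‖ * ‖v j‖ := by
      have hs : Summable fun j : ℤ => ‖u (k - j) * v j‖ := by simpa [norm_mul] using hnorms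
      have := norm_tsum_le_tsum_norm hs
      rw [show (fun j : ℤ => ‖u (k - j) * v j‖) = fun j => ‖u (k - j)‖ * ‖v j‖ from
        funext fun j => norm_mul _ _] at this
      exact this
    have hF2k : ∑' j, ‖u (k - j)‖ * b j = F2 k := by
      have h' := ((Equiv.subLeft k).hasSum_iff
        (f := fun i => ‖u i‖ * b (k - i))).mpr (hF2p k)
      have h'' : HasSum (fun j => ‖u (k - j)‖ * b j) (F2 k) := by
        convert h' using 1
        funext j
        simp [Function.comp_apply, Equiv.subLeft_apply, sub_sub_cancel]
      exact h''.tsum_eq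
    calc Real.sqrt (γ k) * ‖fourierConv u v k‖
        ≤ Real.sqrt (γ k) * ∑' j, ‖u (k - j)‖ * ‖v j‖ :=
          mul_le_mul_of_nonneg_left step1 (Real.sqrt_nonneg _)
      _ = ∑' j, Real.sqrt (γ k) * (‖u (k - j)‖ * ‖v j‖) := tsum_mul_left.symm
      _ ≤ ∑' j, C * (a (k - j) * ‖v j‖ + ‖u (k - j)‖ * b j) := by
          refine Summable.tsum_le_tsum (fun j => ?_) (hnorms.mul_left _) ((h1s.add h2s).mul_left C)
          have hh := mul_le_mul_of_nonneg_right (hsub k j)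
            (mul_nonneg (norm_nonneg (u (k - j))) (norm_nonneg (v j)))
          refine hh.trans_eq ?_
          simp only [ha_def, hb_def]
          ring
      _ = C * ∑' j, (a (k - j) * ‖v j‖ + ‖u (k - j)‖ * b j) := tsum_mul_left
      _ = C * ((∑' j, a (k - j) * ‖v j‖) + ∑' j, ‖u (k - j)‖ * b j) := by
          rw [Summable.tsum_add h1s h2s]
      _ = C * (F1 k + F2 k) := by rw [(hF1p k).tsum_eq, hF2k]
  -- assemble
  set G : lp (fun _ : ℤ => ℝ) 2 := C • (F1 + F2) with hG_def
  have hGk : ∀ k, G k = C * (F1 k + F2 k) := by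
    intro k
    simp [hG_def, lp.coeFn_smul, lp.coeFn_add, Pi.smul_apply, Pi.add_apply, smul_eq_mul, mul_add]
    rfl
  have hkey' : ∀ k, γ k * ‖fourierConv u v k‖ ^ 2 ≤ (G k) ^ 2 := by
    intro k
    have h1 : γ k * ‖fourierConv u v k‖ ^ 2 = (Real.sqrt (γ k) * ‖fourierConv u v k‖) ^ 2 := by
      rw [mul_pow, Real.sq_sqrt (hγ k).le]
    rw [h1, hGk k]
    exact pow_le_pow_left₀ (mul_nonneg (Real.sqrt_nonneg _) (norm_nonneg _)) (key k) 2
  have hG2 : Summable fun k => (G k) ^ 2 := by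
    have := (lp.memℓp G).summable hp
    rwa [rpow_two_conv (fun k => G k)] at this
  have hconv_s : Summable (fun k => γ k * ‖fourierConv u v k‖ ^ 2) :=
    Summable.of_nonneg_of_le (fun k => mul_nonneg (hγ k).le (sq_nonneg _)) hkey' hG2
  refine ⟨hconv_s, ?_⟩
  have hGnorm : Real.sqrt (∑' k, (G k) ^ 2) = ‖G‖ := by
    have h1 := lp.norm_eq_tsum_rpow hp G
    rw [rpow_two_conv (fun k => G k), ENNReal.toReal_ofNat, ← Real.sqrt_eq_rpow] at h1
    exact h1.symm
  have hF1le : ‖F1‖ ≤ Na * (Real.sqrt S * Nb) := by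
    refine hF1n.trans ?_
    rw [tsum_mul_left]
    exact mul_le_mul_of_nonneg_left hv1le hNa0
  have hF2le : ‖F2‖ ≤ Nb * (Real.sqrt S * Na) := by
    refine hF2n.trans ?_
    rw [tsum_mul_left]
    exact mul_le_mul_of_nonneg_left hu1le hNb0
  calc Real.sqrt (∑' k, γ k * ‖fourierConv u v k‖ ^ 2)
      ≤ Real.sqrt (∑' k, (G k) ^ 2) := Real.sqrt_le_sqrt (Summable.tsum_le_tsum hkey' hconv_s hG2)
    _ = ‖G‖ := hGnorm
    _ ≤ C * (‖F1‖ + ‖F2‖) := by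
        rw [hG_def, norm_smul, Real.norm_eq_abs, abs_of_pos hC]
        exact mul_le_mul_of_nonneg_left (norm_add_le _ _) hC.le
    _ ≤ C * (Na * (Real.sqrt S * Nb) + Nb * (Real.sqrt S * Na)) := by
        refine mul_le_mul_of_nonneg_left (add_le_add hF1le hF2le) hC.le
    _ = 2 * C * Real.sqrt S * Na * Nb := by ring
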